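/- Let N, N_Ω ∈ ℕ with N ≥ 2N_Ω + 2 and let V ∈ ℂ^{(N−2N_Ω−1)×(N+1)} be the matrix with rows indexed by n ∈ {N_Ω+1, …, N−N_Ω−1} and columns indexed by ℓ ∈ {0, …, N}, with entries V_{n,ℓ} = e^{−2πi n ℓ/N}. Let S ⊆ {0, …, N} satisfy max_{m ∈ S} m < N − 2N_Ω − 1, let c† ∈ ℂ^{N+1} have support contained in S, and set s = V c†. Then c† is the unique minimizer of ‖s − V c‖₂ over all c ∈ ℂ^{N+1} with support contained in S. -/

import Mathlib

open Complex Real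

/-- The Euclidean (ℓ²) norm of a finite complex vector. -/
noncomputable def l2Norm {m : Type*} [Fintype m] (v : m → ℂ) : ℝ :=
  Real.sqrt (∑ i, ‖v i‖ ^ 2)

lemma l2Norm_zero {m : Type*} [Fintype m] : l2Norm (0 : m → ℂ) = 0 := by
  simp [l2Norm]

lemma l2Norm_nonneg {m : Type*} [Fintype m] (v : m → ℂ) : 0 ≤ l2Norm v :=
  Real.sqrt_nonneg _

lemma l2Norm_eq_zero {m : Type*} [Fintype m] {v : m → ℂ} (h : l2Norm v = 0) : v = 0 := by
  have hnn : ∀ i ∈ Finset.univ, (0:ℝ) ≤ ‖v i‖ ^ 2 := fun i _ => sq_nonneg _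
  have hsum : (∑ i, ‖v i‖ ^ 2) = 0 :=
    (Real.sqrt_eq_zero (Finset.sum_nonneg hnn)).mp h
  funext i
  have h1 := (Finset.sum_eq_zero_iff_of_nonneg hnn).mp hsum i (Finset.mem_univ i)
  have h2 : ‖v i‖ = 0 := sq_eq_zero_iff.mp h1
  simpa using norm_eq_zero.mp h2

/-- **Exact recovery by the OMP least-squares step.**
Let `V ∈ ℂ^{(N−2N_Ω−1)×(N+1)}` have entries `V_{n,ℓ} = e^{−2πi n ℓ/N}` with
rows indexed by `n ∈ {N_Ω+1, …, N−N_Ω−1}` and columns by `ℓ ∈ {0, …, N}`.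
If `S ⊆ {0,…,N}` satisfies `max S < N − 2N_Ω − 1`, `c†` is supported in `S`
and `s = V c†`, then `c†` is the unique minimizer of `‖s − V c‖₂` over all
`c` supported in `S`. -/
theorem omp_least_squares_unique_minimizer
    (N NΩ : ℕ) (hN : 2 * NΩ + 2 ≤ N)
    (V : Matrix (Fin (N - 2 * NΩ - 1)) (Fin (N + 1)) ℂ)
    (hV : ∀ (n : Fin (N - 2 * NΩ - 1)) (ℓ : Fin (N + 1)),
      V n ℓ = Complex.exp (-2 * π * I * ((n : ℕ) + NΩ + 1) * (ℓ : ℕ) / N))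
    (S : Finset (Fin (N + 1)))
    (hmax : ∀ m ∈ S, (m : ℕ) < N - 2 * NΩ - 1)
    (cdag : Fin (N + 1) → ℂ) (hsupp : ∀ ℓ, cdag ℓ ≠ 0 → ℓ ∈ S)
    (s : Fin (N - 2 * NΩ - 1) → ℂ) (hs : s = V.mulVec cdag) :
    ∀ c : Fin (N + 1) → ℂ, (∀ ℓ, c ℓ ≠ 0 → ℓ ∈ S) →
      l2Norm (s - V.mulVec cdag) ≤ l2Norm (s - V.mulVec c) ∧
      (l2Norm (s - V.mulVec c) = l2Norm (s - V.mulVec cdag) → c = cdag) := by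
  intro c hc
  have hzero : s - V.mulVec cdag = 0 := by rw [hs]; simp
  constructor
  · rw [hzero, l2Norm_zero]; exact l2Norm_nonneg _
  · intro heq
    rw [hzero, l2Norm_zero] at heq
    have hVc : V.mulVec c = V.mulVec cdag := by
      have h0 : s - V.mulVec c = 0 := l2Norm_eq_zero heq
      have h1 : s = V.mulVec c := (sub_eq_zero.mp h0)
      rw [← h1, hs]
    set d : Fin (N + 1) → ℂ := c - cdag with hd
    have hdS : ∀ ℓ, d ℓ ≠ 0 → ℓ ∈ S := by
      intro ℓ hℓ
      by_contra hnot
      have h1 : c ℓ = 0 := by by_contra h'; exact hnot (hc ℓ h')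
      have h2 : cdag ℓ = 0 := by by_contra h'; exact hnot (hsupp ℓ h')
      apply hℓ; simp [hd, h1, h2]
    have hVd : V.mulVec d = 0 := by
      have h1 : V.mulVec d = V.mulVec c - V.mulVec cdag := by
        simp [hd, Matrix.mulVec_sub]
      rw [h1, hVc, sub_self]
    have hNpos : 0 < N := by omega
    set ζ : ℂ := Complex.exp (-2 * π * I / N) with hζ
    have hζprim : IsPrimitiveRoot ζ N := by
      have h1 : IsPrimitiveRoot (Complex.exp (2 * π * I / N)) N :=
        Complex.isPrimitiveRoot_exp N (by omega)
      have h2 : ζ = (Complex.exp (2 * π * I / N))⁻¹ := by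
        rw [hζ, ← Complex.exp_neg]; ring_nf
      rw [h2]; exact h1.inv
    set P : Polynomial ℂ := ∑ ℓ ∈ S, Polynomial.C (d ℓ) * Polynomial.X ^ (ℓ : ℕ) with hP
    have hdeg : P.degree < ((N - 2 * NΩ - 1 : ℕ) : WithBot ℕ) := by
      apply lt_of_le_of_lt (Polynomial.degree_sum_le _ _)
      apply Finset.sup_lt_iff
        (by exact_mod_cast WithBot.bot_lt_coe (N - 2 * NΩ - 1)) |>.mpr
      intro ℓ hℓ
      calc (Polynomial.C (d ℓ) * Polynomial.X ^ (ℓ : ℕ)).degree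
          ≤ ((ℓ : ℕ) : WithBot ℕ) := by
            simpa using Polynomial.degree_C_mul_X_pow_le (ℓ : ℕ) (d ℓ)
        _ < ((N - 2 * NΩ - 1 : ℕ) : WithBot ℕ) := by exact_mod_cast hmax ℓ hℓ
    have hpow : ∀ (k : ℕ), Complex.exp (-2 * π * I * k / N) = ζ ^ k := by
      intro k
      rw [hζ, ← Complex.exp_nat_mul]
      congr 1; push_cast; ring
    have heval : ∀ n : Fin (N - 2 * NΩ - 1),
        P.eval (ζ ^ ((n : ℕ) + NΩ + 1)) = 0 := by
      intro n
      have hrow : V.mulVec d n = P.eval (ζ ^ ((n : ℕ) + NΩ + 1)) := by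
        rw [Matrix.mulVec]
        simp only [hP, Polynomial.eval_finset_sum, Polynomial.eval_mul, Polynomial.eval_C,
          Polynomial.eval_pow, Polynomial.eval_X, dotProduct]
        rw [show (∑ ℓ, V n ℓ * d ℓ) = ∑ ℓ ∈ S, V n ℓ * d ℓ by
          apply (Finset.sum_subset (Finset.subset_univ S) _).symm
          intro ℓ _ hℓ
          have hd0 : d ℓ = 0 := by by_contra h'; exact hℓ (hdS ℓ h')
          simp [hd0]]
        apply Finset.sum_congr rfl
        intro ℓ _
        rw [hV n ℓ]
        rw [show (-2 * (π : ℂ) * I * ((n : ℕ) + NΩ + 1) * (ℓ : ℕ) / N)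
            = -2 * π * I * ((((n : ℕ) + NΩ + 1) * (ℓ : ℕ) : ℕ)) / N by push_cast; ring]
        rw [hpow, pow_mul]
        ring
      have h1 := congrFun hVd n
      rw [hrow] at h1
      simpa using h1
    have hinj : Function.Injective
        (fun n : Fin (N - 2 * NΩ - 1) => ζ ^ ((n : ℕ) + NΩ + 1)) := by
      intro a b hab
      have ha : (a : ℕ) + NΩ + 1 < N := by have := a.isLt; omega
      have hb : (b : ℕ) + NΩ + 1 < N := by have := b.isLt; omega
      have h1 := hζprim.pow_inj ha hb hab
      exact Fin.ext (by omega)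
    have hP0 : P = 0 := by
      rcases eq_or_ne P 0 with h | h
      · exact h
      · apply Polynomial.eq_zero_of_natDegree_lt_card_of_eval_eq_zero P hinj heval
        rw [Fintype.card_fin]
        exact (Polynomial.natDegree_lt_iff_degree_lt h).mpr hdeg
    have hdzero : ∀ ℓ, d ℓ = 0 := by
      intro ℓ
      by_cases hℓ : ℓ ∈ S
      · have h1 := congrArg (fun q => Polynomial.coeff q (ℓ : ℕ)) hP0
        simp only [hP, Polynomial.finset_sum_coeff, Polynomial.coeff_C_mul,
          Polynomial.coeff_X_pow, Polynomial.coeff_zero] at h1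
        rw [Finset.sum_eq_single ℓ] at h1
        · simpa using h1
        · intro b _ hb
          have hne : (b : ℕ) ≠ (ℓ : ℕ) := fun h => hb (Fin.ext h)
          simp [Ne.symm hne]
        · intro h; exact absurd hℓ h
      · by_contra h'; exact hℓ (hdS ℓ h')
    funext ℓ
    have h1 : c ℓ - cdag ℓ = 0 := hdzero ℓ
    exact sub_eq_zero.mp h1
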